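/- Let (n_k)_{k≥0} be the sparse index sequence (n_0 = 0, n_{k+1} = n_k + 2^{k·(Σ_{i≤k} i)}) and set p_k = 2^{Σ_{i≤k} i}. Let r(n) = 2^{−k} if n = n_k and r(n) = 1 otherwise, and for x ∈ 2^ℕ with infinitely many 1s let C_m(x) = ∏_{i=0}^{m−1} r(n_i(x)), where n_0(x) < n_1(x) < ⋯ enumerates {n : x(n) = 1}. If x ∈ 2^ℕ has infinitely many 1s and the series Σ_{m=0}^∞ C_m(x) converges, then for infinitely many k, the number of indices i with n_k < i < n_{k+1} and x(i) = 1 is at most p_k. Equivalently, if for all but finitely many k the number of 1s of x strictly between n_k and n_{k+1} exceeds p_k, then Σ_{m=0}^∞ C_m(x) = ∞. -/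

import Mathlib

open MeasureTheory Filter Set ENNReal

/-- `μ` is the product of the marginal measures `m n` on `Bool`. -/
def IsProductMeasure (μ : Measure (ℕ → Bool)) (m : ℕ → Measure Bool) : Prop :=
  ∀ (s : Finset ℕ) (a : ℕ → Bool),
    μ {x | ∀ n ∈ s, x n = a n} = ∏ n ∈ s, m n {a n}

/-- The sparse index sequence: `n₀ = 0` and `n_{k+1} = n_k + 2 ^ (k · Σ_{i ≤ k} i)`. -/
def sparseSeq : ℕ → ℕ
  | 0 => 0
  | k + 1 => sparseSeq k + 2 ^ (k * ∑ i ∈ Finset.range (k + 1), i)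

/-- `p_k = 2 ^ (Σ_{i ≤ k} i)`. -/
def sparseP (k : ℕ) : ℕ := 2 ^ (∑ i ∈ Finset.range (k + 1), i)

/-- The marginals of the sparse measure: `m (n_k) {1} = 2^k/(2^k+1)` along the sparse index
sequence, and `m n {1} = 1/2` for `n` not of the form `n_k`. -/
def IsSparseMarginals (m : ℕ → Measure Bool) : Prop :=
  (∀ k : ℕ, m (sparseSeq k) {true} = (2 ^ k : ℝ≥0∞) / (2 ^ k + 1)) ∧
    ∀ n : ℕ, (∀ k : ℕ, n ≠ sparseSeq k) → m n {true} = 1 / 2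

/-- The multiplicative jump `m n {0} / m n {1}` of the sparse measure: `r (n_k) = 2⁻ᵏ` along the
sparse index sequence and `r n = 1` otherwise. -/
def IsSparseJump (r : ℕ → ℝ≥0∞) : Prop :=
  (∀ k : ℕ, r (sparseSeq k) = ((2 : ℝ≥0∞) ^ k)⁻¹) ∧
    ∀ n : ℕ, (∀ k : ℕ, n ≠ sparseSeq k) → r n = 1

/-- The number of indices `i` with `n_k < i < n_{k+1}` and `x i = 1`. -/
def onesBetween (x : ℕ → Bool) (k : ℕ) : ℕ :=
  ((Finset.Ioo (sparseSeq k) (sparseSeq (k + 1))).filter fun i => x i = true).card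

lemma sparseSeq_strictMono : StrictMono sparseSeq := by
  apply strictMono_nat_of_lt_succ
  intro k
  have : 0 < 2 ^ (k * ∑ i ∈ Finset.range (k + 1), i) := pow_pos (by norm_num) _
  simp only [sparseSeq]
  omega

lemma sparseJump_le_one {r : ℕ → ℝ≥0∞} (hr : IsSparseJump r) (n : ℕ) : r n ≤ 1 := by
  by_cases h : ∃ k, n = sparseSeq k
  · obtain ⟨k, rfl⟩ := h
    rw [hr.1 k]
    exact ENNReal.inv_le_one.mpr (one_le_pow_of_one_le' (by norm_num) k)
  · push_neg at h
    rw [hr.2 n h]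

lemma prod_sparse_inv (k : ℕ) :
    ∏ j ∈ Finset.range (k + 1), ((2 : ℝ≥0∞) ^ j)⁻¹ = ((sparseP k : ℝ≥0∞))⁻¹ := by
  simp_rw [ENNReal.inv_pow]
  rw [Finset.prod_pow_eq_pow_sum, ← ENNReal.inv_pow, sparseP]
  push_cast
  ring_nf

lemma prod_le_prod_subset_ennreal {f : ℕ → ℝ≥0∞} (h1 : ∀ n, f n ≤ 1) {s t : Finset ℕ}
    (hst : s ⊆ t) : ∏ n ∈ t, f n ≤ ∏ n ∈ s, f n := by
  rw [← Finset.prod_sdiff hst]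
  calc (∏ n ∈ t \ s, f n) * ∏ n ∈ s, f n ≤ 1 * ∏ n ∈ s, f n :=
        mul_le_mul' (Finset.prod_le_one (fun i _ => zero_le) (fun i _ => h1 i)) le_rfl
    _ = ∏ n ∈ s, f n := one_mul _

lemma key_lower_bound {r : ℕ → ℝ≥0∞} (hr : IsSparseJump r) {N : ℕ → ℕ}
    (hN : Function.Injective N) {m k : ℕ} (h : ∀ i < m, N i < sparseSeq (k + 1)) :
    ((sparseP k : ℝ≥0∞))⁻¹ ≤ ∏ i ∈ Finset.range m, r (N i) := by
  classical
  have hprod : ∏ i ∈ Finset.range m, r (N i) = ∏ n ∈ (Finset.range m).image N, r n :=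
    (Finset.prod_image (fun a _ b _ hab => hN hab)).symm
  set A := (Finset.range m).image N with hA
  set Sp := (Finset.range (k + 1)).image sparseSeq with hSp
  have hsub : A.filter (· ∈ Sp) ⊆ Sp := fun n hn => (Finset.mem_filter.mp hn).2
  have hstep1 : ∏ n ∈ A, r n = ∏ n ∈ A.filter (· ∈ Sp), r n := by
    rw [← Finset.prod_filter_mul_prod_filter_not A (· ∈ Sp) r]
    have : ∏ n ∈ A.filter (fun n => ¬ n ∈ Sp), r n = 1 := by
      apply Finset.prod_eq_one
      intro n hn
      obtain ⟨hnA, hnSp⟩ := Finset.mem_filter.mp hn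
      apply hr.2
      intro j hj
      apply hnSp
      rw [hSp]
      apply Finset.mem_image.mpr
      refine ⟨j, ?_, hj.symm⟩
      rw [Finset.mem_range]
      have hlt : sparseSeq j < sparseSeq (k + 1) := by
        obtain ⟨i, hi, rfl⟩ := Finset.mem_image.mp hnA
        rw [← hj]; exact h i (Finset.mem_range.mp hi)
      exact sparseSeq_strictMono.lt_iff_lt.mp hlt
    rw [this, mul_one]
  have hstep2 : ∏ n ∈ Sp, r n ≤ ∏ n ∈ A.filter (· ∈ Sp), r n :=
    prod_le_prod_subset_ennreal (sparseJump_le_one hr) hsub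
  have hstep3 : ∏ n ∈ Sp, r n = ((sparseP k : ℝ≥0∞))⁻¹ := by
    rw [hSp, Finset.prod_image (fun a _ b _ hab => sparseSeq_strictMono.injective hab)]
    rw [← prod_sparse_inv k]
    exact Finset.prod_congr rfl fun j _ => hr.1 j
  rw [hprod, hstep1]
  exact hstep3 ▸ hstep2

lemma count_split (p : ℕ → Prop) [DecidablePred p] {a b : ℕ} (hab : a ≤ b) :
    Nat.count p b = Nat.count p a + ((Finset.Ico a b).filter p).card := by
  rw [Nat.count_eq_card_filter_range, Nat.count_eq_card_filter_range,
    Finset.range_eq_Ico,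
    ← Finset.Ico_union_Ico_eq_Ico (Nat.zero_le a) hab, Finset.filter_union,
    Finset.card_union_of_disjoint]
  rw [Finset.range_eq_Ico]
  exact (Finset.Ico_disjoint_Ico_consecutive 0 a b).mono (Finset.filter_subset p _)
    (Finset.filter_subset p _)

lemma sparseP_pos (k : ℕ) : 0 < sparseP k := pow_pos (by norm_num) _

/-- deterministic: if `x` has infinitely many `1`s and its cocycle series
`Σ_m C m x` converges (is finite), then for infinitely many `k` the number of `1`s of `x`
strictly between `n_k` and `n_{k+1}` is at most `p_k`.  Equivalently, if for all but finitely
many `k` that number exceeds `p_k`, then the series diverges to `+∞`. -/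
theorem sparse_summable_implies_few_ones
    (r : ℕ → ℝ≥0∞) (hr : IsSparseJump r)
    (x : ℕ → Bool) (hx : {n : ℕ | x n = true}.Infinite) :
    ((∑' k : ℕ, ∏ i ∈ Finset.range k, r (Nat.nth (fun n => x n = true) i)) ≠ ⊤ →
        {k : ℕ | onesBetween x k ≤ sparseP k}.Infinite) ∧
      ((∀ᶠ k in atTop, sparseP k < onesBetween x k) →
        (∑' k : ℕ, ∏ i ∈ Finset.range k, r (Nat.nth (fun n => x n = true) i)) = ⊤) := by
  classical
  have main : (∀ᶠ k in atTop, sparseP k < onesBetween x k) →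
      (∑' k : ℕ, ∏ i ∈ Finset.range k, r (Nat.nth (fun n => x n = true) i)) = ⊤ := by
    intro hev
    obtain ⟨K, hK⟩ := eventually_atTop.mp hev
    set N : ℕ → ℕ := Nat.nth (fun n => x n = true) with hNdef
    set A : ℕ → ℕ := fun k => Nat.count (fun n => x n = true) (sparseSeq (k + 1)) with hAdef
    -- lower bound on partial products
    have hCbound : ∀ k m, m ≤ A k →
        ((sparseP k : ℝ≥0∞))⁻¹ ≤ ∏ i ∈ Finset.range m, r (N i) := by
      intro k m hm
      apply key_lower_bound hr (Nat.nth_injective hx)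
      intro i hi
      exact (Nat.lt_nth_iff_count_lt hx).mp (lt_of_lt_of_le hi hm)
    -- growth of A
    have hAgrow : ∀ k, sparseP (k + 1) < onesBetween x (k + 1) →
        A k + sparseP (k + 1) < A (k + 1) := by
      intro k hk
      have hab : sparseSeq (k + 1) ≤ sparseSeq (k + 1 + 1) :=
        (sparseSeq_strictMono.monotone (by omega))
      have hsplit := count_split (fun n => x n = true) hab
      have hcard : onesBetween x (k + 1) ≤
          ((Finset.Ico (sparseSeq (k + 1)) (sparseSeq (k + 1 + 1))).filter
            (fun n => x n = true)).card := by
        apply Finset.card_le_card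
        exact Finset.filter_subset_filter _ Finset.Ioo_subset_Ico_self
      simp only [hAdef]
      omega
    have hmono : Monotone A := fun a b hab =>
      Nat.count_monotone _ (sparseSeq_strictMono.monotone (by omega))
    set S : ℕ → ℝ≥0∞ :=
      fun k => ∑ m ∈ Finset.range (A k + 1), ∏ i ∈ Finset.range m, r (N i) with hSdef
    have hstep : ∀ k, K ≤ k + 1 → S k + 1 ≤ S (k + 1) := by
      intro k hKk
      have h1 : A k + 1 ≤ A (k + 1) + 1 := by
        have := hmono (by omega : k ≤ k + 1); omega
      have hgrow := hAgrow k (hK (k + 1) hKk)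
      have hsplit : S (k + 1) = S k +
          ∑ m ∈ Finset.Ico (A k + 1) (A (k + 1) + 1), ∏ i ∈ Finset.range m, r (N i) := by
        rw [hSdef]
        simp only [Finset.range_eq_Ico]
        exact (Finset.sum_Ico_consecutive _ (Nat.zero_le _) h1).symm
      rw [hsplit]
      apply add_le_add_right
      -- block sum is at least 1
      have hb : ∀ m ∈ Finset.Ico (A k + 1) (A (k + 1) + 1),
          ((sparseP (k + 1) : ℝ≥0∞))⁻¹ ≤ ∏ i ∈ Finset.range m, r (N i) := by
        intro m hm
        exact hCbound (k + 1) m (by have := Finset.mem_Ico.mp hm; omega)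
      have hsum := Finset.card_nsmul_le_sum _ _ _ hb
      rw [Nat.card_Ico, nsmul_eq_mul] at hsum
      refine le_trans ?_ hsum
      have hP0 : ((sparseP (k + 1) : ℝ≥0∞)) ≠ 0 := by
        simp only [ne_eq, Nat.cast_eq_zero]
        exact (sparseP_pos (k + 1)).ne'
      calc (1 : ℝ≥0∞) = (sparseP (k + 1) : ℝ≥0∞) * ((sparseP (k + 1) : ℝ≥0∞))⁻¹ :=
            (ENNReal.mul_inv_cancel hP0 (ENNReal.natCast_ne_top _)).symm
        _ ≤ ((A (k + 1) + 1 - (A k + 1) : ℕ) : ℝ≥0∞) * ((sparseP (k + 1) : ℝ≥0∞))⁻¹ := by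
            apply mul_le_mul_left
            exact Nat.cast_le.mpr (by omega)
    have hiter : ∀ j : ℕ, (j : ℝ≥0∞) ≤ S (K + j) := by
      intro j
      induction j with
      | zero => simp
      | succ j ih =>
        push_cast
        calc (j : ℝ≥0∞) + 1 ≤ S (K + j) + 1 := add_le_add_left ih 1
          _ ≤ S (K + j + 1) := hstep (K + j) (by omega)
    by_contra htop
    obtain ⟨n, hn⟩ := ENNReal.exists_nat_gt htop
    have h1 : S (K + n) ≤ ∑' m : ℕ, ∏ i ∈ Finset.range m, r (N i) :=
      ENNReal.sum_le_tsum _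
    exact absurd (le_trans (hiter n) h1) (not_le.mpr hn)
  refine ⟨?_, main⟩
  intro hne
  by_contra hfin
  rw [Set.not_infinite] at hfin
  apply hne
  apply main
  have hev := Set.Finite.eventually_cofinite_notMem hfin
  rw [Nat.cofinite_eq_atTop] at hev
  filter_upwards [hev] with k hk
  exact lt_of_not_ge (by simpa using hk)
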